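/- The map ι satisfies ⟨ι(x), ι(y)⟩ = −⟨x,y⟩ for all x, y ∈ P⊗ℚ (so ι is an isometric embedding of P with its form negated); ι(P) ⊆ N; and ι(P) = {v ∈ N : ⟨v, Ẽ_j^(k)⟩ = 0 for all j ∈ {10,11,12} and k ∈ {1,2}}. In particular, ι(P) is a primitive sublattice of N, and it equals the ℤ-span of {Ẽ_j^(ℓ) : 1 ≤ j ≤ 9, ℓ ∈ {1,2}} together with w₁, w₂, w₃. -/

import Mathlib

noncomputable section

abbrev F3 : Type := ZMod 3 × ZMod 3
abbrev IP : Type := F3 × Fin 2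
abbrev VP : Type := IP → ℚ

/-- The basis vectors `E_t^(k)` (with `k : Fin 2` corresponding to `k+1 ∈ {1,2}`). -/
def Ev (t : F3) (k : Fin 2) : VP := Pi.single (t, k) 1

/-- Gram coefficients of the bilinear form on `V`. -/
def GP : IP → IP → ℚ := fun i j =>
  if i.1 = j.1 then (if i.2 = j.2 then -2 else 1) else 0

/-- The symmetric bilinear form on `V`. -/
def BP (x y : VP) : ℚ := ∑ i : IP, ∑ j : IP, x i * GP i j * y j

lemma BP_add_left (a b x : VP) : BP (a + b) x = BP a x + BP b x := by
  simp only [BP, Pi.add_apply, add_mul, Finset.sum_add_distrib]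

lemma BP_zsmul_left (c : ℤ) (a x : VP) : BP (c • a) x = c * BP a x := by
  simp only [BP, Pi.smul_apply, zsmul_eq_mul, Finset.mul_sum, mul_assoc]

lemma BP_zero_left (x : VP) : BP 0 x = 0 := by
  simp [BP]

/-- `E_t := E_t^(1) + 2·E_t^(2)`. -/
def EV (t : F3) : VP := Ev t 0 + 2 • Ev t 1

/-- The affine line in `𝔽₃²` through `p` with direction `d`. -/
def lineF (p d : F3) : Finset F3 := Finset.image (fun s : ZMod 3 => p + s • d) Finset.univ

def IsLine (L : Finset F3) : Prop := ∃ p d : F3, d ≠ 0 ∧ L = lineF p d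

def AreParallel (L L' : Finset F3) : Prop :=
  ∃ p p' d : F3, d ≠ 0 ∧ L = lineF p d ∧ L' = lineF p' d

/-- `e(L) := (1/3)·∑_{t∈L} E_t`. -/
def eL (L : Finset F3) : VP := (3 : ℚ)⁻¹ • ∑ t ∈ L, EV t

/-- Generators of the root lattice `R` of type `A₂⁹`. -/
def Rgen : Set VP := {x | ∃ t k, x = Ev t k}

/-- The root lattice `R`. -/
def Rlat : Submodule ℤ VP := Submodule.span ℤ Rgen

/-- The lattice `P`. -/
def Plat : Submodule ℤ VP :=
  Submodule.span ℤ (Rgen ∪ {x | ∃ L L', AreParallel L L' ∧ x = eL L - eL L'})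

/-- The dual lattice `Λ* = {v | ⟨v,λ⟩ ∈ ℤ for all λ ∈ Λ}`. -/
def dualP (Λ : Submodule ℤ VP) : Submodule ℤ VP where
  carrier := {v | ∀ x ∈ Λ, ∃ n : ℤ, BP v x = n}
  zero_mem' := fun x _ => ⟨0, by simp [BP_zero_left]⟩
  add_mem' := by
    intro a b ha hb x hx
    obtain ⟨n, hn⟩ := ha x hx
    obtain ⟨m, hm⟩ := hb x hx
    exact ⟨n + m, by rw [BP_add_left, hn, hm]; push_cast; ring⟩
  smul_mem' := by
    intro c v hv x hx
    obtain ⟨n, hn⟩ := hv x hx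
    exact ⟨c * n, by rw [BP_zsmul_left, hn]; push_cast; ring⟩

def L12 : Finset F3 := lineF (0, 0) (0, 1)
def L34 : Finset F3 := lineF (0, 0) (1, 0)
def L00 : Finset F3 := lineF (0, 0) (1, 1)

def p1 : VP := eL L34 + eL L00
def p2 : VP := eL L12 + eL L34
def p3 : VP := eL L12 + eL L00

def pv : Fin 3 → VP := ![p1, p2, p3]


abbrev JN : Type := Fin 12 × Fin 2
abbrev WN : Type := JN → ℚ

/-- The simple roots `Ẽ_j^(k)` (with `k : Fin 2` corresponding to `k+1 ∈ {1,2}`). -/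
def Et (j : Fin 12) (k : Fin 2) : WN := Pi.single (j, k) 1

/-- Gram coefficients of the (positive definite) bilinear form on `W`. -/
def GN : JN → JN → ℚ := fun i j =>
  if i.1 = j.1 then (if i.2 = j.2 then 2 else -1) else 0

/-- The symmetric bilinear form on `W`. -/
def BW (x y : WN) : ℚ := ∑ i : JN, ∑ j : JN, x i * GN i j * y j

/-- `Ẽ_j := Ẽ_j^(1) + 2·Ẽ_j^(2)`. -/
def EtV (j : Fin 12) : WN := Et j 0 + 2 • Et j 1

/-- The rows of the generating matrix of the glue code. -/
def glueMat : Fin 6 → Fin 12 → ℚ :=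
  ![![0, 1, 1, 1, 1, 1, 1, 0, 0, 0, 0, 0],
    ![-1, 0, 1, -1, -1, 1, 0, 1, 0, 0, 0, 0],
    ![-1, 1, 0, 1, -1, -1, 0, 0, 1, 0, 0, 0],
    ![-1, -1, 1, 0, 1, -1, 0, 0, 0, 1, 0, 0],
    ![-1, -1, -1, 1, 0, 1, 0, 0, 0, 0, 1, 0],
    ![-1, 1, -1, -1, 1, 0, 0, 0, 0, 0, 0, 1]]

/-- The glue vectors `w_i := (1/3)·∑_j a_{ij}·Ẽ_j`. -/
def wvec (i : Fin 6) : WN := (3 : ℚ)⁻¹ • ∑ j : Fin 12, glueMat i j • EtV j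

/-- The Niemeier lattice `N` of type `A₂¹²`. -/
def NL : Submodule ℤ WN :=
  Submodule.span ℤ ({x | ∃ j k, x = Et j k} ∪ Set.range wvec)

/-- The index of the `A₂`-block that `E_t` is sent to (0-indexed). -/
def iotaIdx : F3 → Fin 12 := fun t =>
  if t = (0, 0) then 5 else if t = (0, 1) then 3 else if t = (0, 2) then 6
  else if t = (1, 0) then 4 else if t = (1, 1) then 2 else if t = (1, 2) then 1
  else if t = (2, 0) then 7 else if t = (2, 1) then 0 else 8

/-- The sign with which `E_t^(ℓ)` is sent to `±Ẽ_{iotaIdx t}^(ℓ)`. -/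
def iotaSgn : F3 → ℚ := fun t => if t.1 = 1 then -1 else 1

/-- The ℚ-linear map `ι : P ⊗ ℚ → W` of the proposition. -/
def iota : VP →ₗ[ℚ] WN :=
  (Pi.basisFun ℚ IP).constr ℚ fun i => iotaSgn i.1 • Et (iotaIdx i.1) i.2

-- ===================== auxiliary development =====================
namespace Aux8

/-! ### Integer models -/

def sZ : F3 → ℤ := fun t => if t.1 = 1 then -1 else 1

def GNZ : JN → JN → ℤ := fun i j =>
  if i.1 = j.1 then (if i.2 = j.2 then 2 else -1) else 0

def GPZ : IP → IP → ℤ := fun i j =>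
  if i.1 = j.1 then (if i.2 = j.2 then -2 else 1) else 0

def glueMatZ : Fin 6 → Fin 12 → ℤ :=
  ![![0, 1, 1, 1, 1, 1, 1, 0, 0, 0, 0, 0],
    ![-1, 0, 1, -1, -1, 1, 0, 1, 0, 0, 0, 0],
    ![-1, 1, 0, 1, -1, -1, 0, 0, 1, 0, 0, 0],
    ![-1, -1, 1, 0, 1, -1, 0, 0, 0, 1, 0, 0],
    ![-1, -1, -1, 1, 0, 1, 0, 0, 0, 0, 1, 0],
    ![-1, 1, -1, -1, 1, 0, 0, 0, 0, 0, 0, 1]]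

lemma iotaSgn_cast (t : F3) : iotaSgn t = (sZ t : ℚ) := by
  unfold iotaSgn sZ; split_ifs <;> norm_num

lemma GN_cast (i j : JN) : GN i j = (GNZ i j : ℚ) := by
  unfold GN GNZ; split_ifs <;> norm_num

lemma GP_cast (i j : IP) : GP i j = (GPZ i j : ℚ) := by
  unfold GP GPZ; split_ifs <;> norm_num

lemma glueMat_cast (i : Fin 6) (j : Fin 12) : glueMat i j = (glueMatZ i j : ℚ) := by
  fin_cases i <;> fin_cases j <;> norm_num [glueMat, glueMatZ]

/-! ### BW toolkit -/

lemma BW_add_left (a b x : WN) : BW (a + b) x = BW a x + BW b x := by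
  simp only [BW, Pi.add_apply, add_mul, Finset.sum_add_distrib]

lemma BW_zero_left (x : WN) : BW 0 x = 0 := by simp [BW]

lemma BW_smulq_left (c : ℚ) (a x : WN) : BW (c • a) x = c * BW a x := by
  simp only [BW, Pi.smul_apply, smul_eq_mul, Finset.mul_sum, mul_assoc]

lemma BW_sum_left {α : Type*} (s : Finset α) (f : α → WN) (y : WN) :
    BW (∑ i ∈ s, f i) y = ∑ i ∈ s, BW (f i) y := by
  classical
  induction s using Finset.cons_induction with
  | empty => simp [BW_zero_left]
  | cons a s ha ih => rw [Finset.sum_cons, Finset.sum_cons, BW_add_left, ih]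

lemma BW_add_right (x a b : WN) : BW x (a + b) = BW x a + BW x b := by
  simp only [BW, Pi.add_apply, mul_add, Finset.sum_add_distrib]

lemma BW_zero_right (x : WN) : BW x 0 = 0 := by simp [BW]

lemma BW_smulq_right (c : ℚ) (x a : WN) : BW x (c • a) = c * BW x a := by
  simp only [BW, Pi.smul_apply, smul_eq_mul, Finset.mul_sum]
  exact Finset.sum_congr rfl fun i _ => Finset.sum_congr rfl fun j _ => by ring

lemma BW_sum_right {α : Type*} (s : Finset α) (x : WN) (f : α → WN) :
    BW x (∑ i ∈ s, f i) = ∑ i ∈ s, BW x (f i) := by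
  classical
  induction s using Finset.cons_induction with
  | empty => simp [BW_zero_right]
  | cons a s ha ih => rw [Finset.sum_cons, Finset.sum_cons, BW_add_right, ih]

lemma BW_Et_Et (j : Fin 12) (k : Fin 2) (j' : Fin 12) (k' : Fin 2) :
    BW (Et j k) (Et j' k') = GN (j, k) (j', k') := by
  simp [BW, Et, Pi.single_apply, mul_ite, ite_mul, Finset.sum_ite_eq, Finset.sum_ite_eq']

lemma BW_Et0 (v : WN) (j : Fin 12) : BW v (Et j 0) = 2 * v (j, 0) - v (j, 1) := by
  simp only [BW, Et, Pi.single_apply, mul_ite, ite_mul, mul_one, mul_zero,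
    Finset.sum_ite_eq, Finset.mem_univ, if_true]
  rw [Fintype.sum_prod_type]
  simp [GN, Fin.sum_univ_two, Finset.sum_ite_eq, ite_mul]
  ring

lemma BW_Et1 (v : WN) (j : Fin 12) : BW v (Et j 1) = -v (j, 0) + 2 * v (j, 1) := by
  simp only [BW, Et, Pi.single_apply, mul_ite, ite_mul, mul_one, mul_zero,
    Finset.sum_ite_eq, Finset.mem_univ, if_true]
  rw [Fintype.sum_prod_type]
  simp [GN, Fin.sum_univ_two, Finset.sum_ite_eq, ite_mul]
  ring

/-! ### iota on basis vectors -/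

lemma iota_repr (x : VP) :
    iota x = ∑ i : IP, x i • (iotaSgn i.1 • Et (iotaIdx i.1) i.2) := by
  rw [iota, Module.Basis.constr_apply_fintype]
  simp [Pi.basisFun_equivFun]

lemma iota_single (t : F3) (k : Fin 2) :
    iota (Ev t k) = iotaSgn t • Et (iotaIdx t) k := by
  rw [iota]
  have : Ev t k = (Pi.basisFun ℚ IP) (t, k) := by
    simp [Ev, Pi.basisFun_apply]
  rw [this, Module.Basis.constr_basis]

/-! ### the isometry -/

lemma gramZ : ∀ i j : IP,
    sZ i.1 * sZ j.1 * GNZ (iotaIdx i.1, i.2) (iotaIdx j.1, j.2) = -(GPZ i j) := by decide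

lemma gramQ (i j : IP) :
    iotaSgn i.1 * iotaSgn j.1 * GN (iotaIdx i.1, i.2) (iotaIdx j.1, j.2) = -GP i j := by
  rw [iotaSgn_cast, iotaSgn_cast, GN_cast, GP_cast]
  exact_mod_cast gramZ i j

lemma iso (x y : VP) : BW (iota x) (iota y) = -BP x y := by
  rw [iota_repr x, iota_repr y, BW_sum_left, BP, ← Finset.sum_neg_distrib]
  refine Finset.sum_congr rfl fun i _ => ?_
  rw [BW_smulq_left, BW_smulq_left, BW_sum_right, Finset.mul_sum, Finset.mul_sum,
    ← Finset.sum_neg_distrib]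
  refine Finset.sum_congr rfl fun j _ => ?_
  rw [BW_smulq_right, BW_smulq_right, BW_Et_Et]
  linear_combination (x i * y j) * gramQ i j

end Aux8

namespace Aux8

/-! ### Coordinate formulas -/

def EtVZ (j : Fin 12) (a : JN) : ℤ := if j = a.1 then (if a.2 = 0 then 1 else 2) else 0

lemma EtV_apply (j : Fin 12) (a : JN) : EtV j a = (EtVZ j a : ℚ) := by
  obtain ⟨j', k⟩ := a
  fin_cases k <;>
    simp [EtV, Et, EtVZ, Pi.single_apply, Prod.ext_iff] <;>
    split_ifs <;> simp_all

lemma wvec_apply (i : Fin 6) (a : JN) :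
    wvec i a = (glueMatZ i a.1 : ℚ) * (if a.2 = 0 then 1 else 2) / 3 := by
  have : ∀ j : Fin 12, glueMat i j • EtV j = fun a => (glueMatZ i j : ℚ) * (EtVZ j a : ℚ) := by
    intro j; funext b; simp [glueMat_cast, EtV_apply]
  simp only [wvec, Pi.smul_apply, Finset.sum_apply, this]
  rw [Finset.sum_congr rfl (fun j _ => rfl)]
  have : ∑ j : Fin 12, (glueMatZ i j : ℚ) * (EtVZ j a : ℚ)
      = (glueMatZ i a.1 : ℚ) * (if a.2 = 0 then 1 else 2) := by
    rw [Finset.sum_eq_single a.1]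
    · simp only [EtVZ]; split_ifs <;> norm_num
    · intro b _ hb; simp [EtVZ, hb]
    · simp
  rw [this]
  simp only [smul_eq_mul]
  ring

def etil (L : Finset F3) : WN := (3 : ℚ)⁻¹ • ∑ t ∈ L, iotaSgn t • EtV (iotaIdx t)

def etilZ (L : Finset F3) (a : JN) : ℤ := ∑ t ∈ L, sZ t * EtVZ (iotaIdx t) a

lemma etil_apply (L : Finset F3) (a : JN) : etil L a = (etilZ L a : ℚ) / 3 := by
  simp only [etil, etilZ, Pi.smul_apply, Finset.sum_apply, smul_eq_mul]
  push_cast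
  rw [Finset.mul_sum, Finset.sum_div]
  exact Finset.sum_congr rfl fun t _ => by rw [iotaSgn_cast, EtV_apply]; ring

lemma iota_EV (t : F3) : iota (EV t) = iotaSgn t • EtV (iotaIdx t) := by
  have h2 : (2 : ℕ) • Ev t 1 = (2 : ℚ) • Ev t 1 := by
    funext a; simp
  rw [EV, h2, map_add, map_smul, iota_single, iota_single, EtV]
  funext a
  simp [Et, smul_smul]
  ring

lemma iota_eL (L : Finset F3) : iota (eL L) = etil L := by
  rw [eL, map_smul, map_sum, etil]
  congr 1
  exact Finset.sum_congr rfl fun t _ => iota_EV t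

end Aux8

namespace Aux8

/-! ### The lattice Λ -/

def Lam : Submodule ℤ WN :=
  Submodule.span ℤ
    ({x | ∃ (j : Fin 12) (k : Fin 2), (j : ℕ) < 9 ∧ x = Et j k} ∪ {wvec 0, wvec 1, wvec 2})

lemma glue_high : ∀ i : Fin 6, i.1 < 3 → ∀ j : Fin 12, 9 ≤ (j : ℕ) → glueMatZ i j = 0 := by
  decide

lemma sum_zsingle (g : JN → ℤ) (a : JN) : (∑ b : JN, g b • Et b.1 b.2) a = (g a : ℚ) := by
  simp [Et, Finset.sum_apply, Pi.single_apply, Prod.mk.eta, mul_ite, Finset.sum_ite_eq,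
    zsmul_eq_mul]

lemma mem_Lam_of (v : WN) (g : JN → ℤ) (m : Fin 6 → ℤ)
    (hm : ∀ i : Fin 6, 3 ≤ i.1 → ∃ k, m i = 3 * k)
    (hsupp : ∀ a : JN, 9 ≤ (a.1 : ℕ) → v a = 0)
    (hcoord : ∀ a : JN, v a = (g a : ℚ) + ∑ i : Fin 6, (m i : ℚ) * wvec i a) :
    v ∈ Lam := by
  classical
  set G : JN → ℤ := fun a =>
    g a + ∑ i : Fin 6, (if 3 ≤ i.1 then (m i / 3) * glueMatZ i a.1 *
      (if a.2 = 0 then 1 else 2) else 0) with hGdef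
  have key : ∀ a : JN, v a = (G a : ℚ) +
      ∑ i : Fin 6, ((if i.1 < 3 then m i else 0 : ℤ) : ℚ) * wvec i a := by
    intro a
    rw [hcoord a, hGdef]
    push_cast
    rw [add_assoc, ← Finset.sum_add_distrib]
    congr 1
    refine Finset.sum_congr rfl fun i _ => ?_
    by_cases h : i.1 < 3
    · simp [h, not_le.mpr h]
    · obtain ⟨k, hk⟩ := hm i (le_of_not_gt h)
      rw [wvec_apply, if_neg h, if_pos (le_of_not_gt h), hk,
        show (3 * k) / 3 = k from by omega]
      push_cast
      split_ifs <;> ring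
  have hveq : v = (∑ a : JN, G a • Et a.1 a.2) +
      ∑ i : Fin 6, (if i.1 < 3 then m i else 0) • wvec i := by
    funext a
    rw [key a, Pi.add_apply]
    congr 1
    · exact (sum_zsingle G a).symm
  rw [hveq]
  apply add_mem
  · refine Submodule.sum_mem _ fun a _ => ?_
    by_cases h : (a.1 : ℕ) < 9
    · exact Submodule.smul_mem _ _ (Submodule.subset_span (Or.inl ⟨a.1, a.2, h, rfl⟩))
    · have hGa : (G a : ℚ) = 0 := by
        have h9 : 9 ≤ (a.1 : ℕ) := le_of_not_gt h
        have := key a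
        rw [hsupp a h9] at this
        have hz : ∀ i : Fin 6, ((if i.1 < 3 then m i else 0 : ℤ) : ℚ) * wvec i a = 0 := by
          intro i
          by_cases hi : i.1 < 3
          · rw [wvec_apply, glue_high i hi a.1 h9]; simp
          · simp [hi]
        rw [Finset.sum_eq_zero fun i _ => hz i, add_zero] at this
        linarith
      have : G a = 0 := by exact_mod_cast hGa
      rw [this]
      simpa using Submodule.zero_mem Lam
  · refine Submodule.sum_mem _ fun i _ => ?_
    by_cases h : i.1 < 3
    · refine Submodule.smul_mem _ _ (Submodule.subset_span (Or.inr ?_))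
      simp only [Set.mem_insert_iff, Set.mem_singleton_iff]
      fin_cases i
      · exact Or.inl rfl
      · exact Or.inr (Or.inl rfl)
      · exact Or.inr (Or.inr rfl)
      · exact absurd h (by decide)
      · exact absurd h (by decide)
      · exact absurd h (by decide)
    · simp [h]

/-! ### the key decidable computation -/

def DZ (p d : F3) (a : JN) : ℤ := etilZ (lineF p d) a - etilZ (lineF (0, 0) d) a

def mco (p d : F3) : Fin 6 → ℤ := fun i =>
  if h : i.1 < 3 then DZ p d (⟨6 + i.1, by omega⟩, 0) else 0

set_option maxRecDepth 40000 in
lemma keyDec : ∀ p d : F3, d ≠ 0 → ∀ a : JN,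
    (9 ≤ (a.1 : ℕ) → DZ p d a = 0) ∧
    (DZ p d a - ∑ i : Fin 6, mco p d i * glueMatZ i a.1 *
      (if a.2 = 0 then 1 else 2)) % 3 = 0 := by decide

lemma keyD (p d : F3) (hd : d ≠ 0) :
    etil (lineF p d) - etil (lineF (0, 0) d) ∈ Lam := by
  have hva : ∀ a : JN, (etil (lineF p d) - etil (lineF (0, 0) d)) a = (DZ p d a : ℚ) / 3 := by
    intro a
    rw [Pi.sub_apply, etil_apply, etil_apply, DZ, div_sub_div_same]
    push_cast
    ring
  refine mem_Lam_of _ (fun a => (DZ p d a - ∑ i : Fin 6, mco p d i * glueMatZ i a.1 *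
      (if a.2 = 0 then 1 else 2)) / 3) (mco p d) ?_ ?_ ?_
  · intro i hi
    exact ⟨0, by simp [mco, not_lt.mpr hi]⟩
  · intro a ha
    rw [hva a, (keyDec p d hd a).1 ha]
    norm_num
  · intro a
    obtain ⟨q, hq⟩ := Int.dvd_of_emod_eq_zero (keyDec p d hd a).2
    have hsum : ∑ i : Fin 6, (mco p d i : ℚ) * wvec i a =
        ((∑ i : Fin 6, mco p d i * glueMatZ i a.1 * (if a.2 = 0 then 1 else 2) : ℤ) : ℚ) / 3 := by
      push_cast [apply_ite (fun z : ℤ => (z : ℚ))]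
      rw [Finset.sum_div]
      refine Finset.sum_congr rfl fun i _ => ?_
      rw [wvec_apply]
      split_ifs <;> ring
    rw [hva a, hq, show (3 : ℤ) * q / 3 = q from by omega, hsum]
    have hq' : (DZ p d a : ℚ) - ((∑ i : Fin 6, mco p d i * glueMatZ i a.1 *
        (if a.2 = 0 then 1 else 2) : ℤ) : ℚ) = 3 * q := by exact_mod_cast congrArg (fun z : ℤ => (z : ℚ)) hq
    linarith

end Aux8

namespace Aux8

/-! ### NL as the span of a finite family -/

def gen : JN ⊕ Fin 6 → WN := Sum.elim (fun a => Et a.1 a.2) wvec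

lemma NL_eq : NL = Submodule.span ℤ (Set.range gen) := by
  unfold NL
  congr 1
  ext x
  constructor
  · rintro (⟨j, k, rfl⟩ | ⟨i, rfl⟩)
    · exact ⟨Sum.inl (j, k), rfl⟩
    · exact ⟨Sum.inr i, rfl⟩
  · rintro ⟨(a | i), rfl⟩
    · exact Or.inl ⟨a.1, a.2, rfl⟩
    · exact Or.inr ⟨i, rfl⟩

lemma gId : ∀ (i' i : Fin 6), glueMatZ i' (⟨6 + i.1, by omega⟩ : Fin 12) =
    if i' = i then 1 else 0 := by decide

lemma NL_coord {v : WN} (hv : v ∈ NL) :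
    ∃ c : (JN ⊕ Fin 6) → ℤ, ∀ a : JN,
      v a = (c (Sum.inl a) : ℚ) + ∑ i : Fin 6, (c (Sum.inr i) : ℚ) * wvec i a := by
  rw [NL_eq, Submodule.mem_span_range_iff_exists_fun] at hv
  obtain ⟨c, hc⟩ := hv
  refine ⟨c, fun a => ?_⟩
  have := congrFun hc a
  rw [Finset.sum_apply, Fintype.sum_sum_type] at this
  rw [← this]
  congr 1
  · have : ∀ b : JN, (c (Sum.inl b) • gen (Sum.inl b)) a
        = (c (Sum.inl b) : ℚ) * (Pi.single b 1 : WN) a := by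
      intro b
      simp [gen, Et]
    rw [Finset.sum_congr rfl fun b _ => this b]
    simp [Pi.single_apply, mul_ite, Finset.sum_ite_eq]

/-- Any element of `NL` supported on the first nine blocks lies in `Lam`. -/
lemma NL_supported_mem_Lam {v : WN} (hv : v ∈ NL)
    (hsupp : ∀ a : JN, 9 ≤ (a.1 : ℕ) → v a = 0) : v ∈ Lam := by
  obtain ⟨c, hc⟩ := NL_coord hv
  -- divisibility of the last three glue coefficients
  have hdvd : ∀ i : Fin 6, 3 ≤ i.1 → ∃ k, c (Sum.inr i) = 3 * k := by
    intro i hi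
    have ha : (9 : ℕ) ≤ ((⟨6 + i.1, by omega⟩ : Fin 12) : ℕ) := by simp; omega
    have h0 : v ((⟨6 + i.1, by omega⟩ : Fin 12), 0) = 0 := hsupp _ ha
    rw [hc _] at h0
    have hwv : ∀ i' : Fin 6, wvec i' ((⟨6 + i.1, by omega⟩ : Fin 12), 0)
        = if i' = i then (1 : ℚ) / 3 else 0 := by
      intro i'
      rw [wvec_apply]
      simp only [gId i' i]
      split_ifs <;> norm_num
    rw [Finset.sum_congr rfl fun i' _ => by rw [hwv i']] at h0
    simp only [mul_ite, mul_zero, Finset.sum_ite_eq, Finset.sum_ite_eq', Finset.mem_univ, if_true] at h0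
    have : (3 * c (Sum.inl ((⟨6 + i.1, by omega⟩ : Fin 12), 0)) + c (Sum.inr i) : ℚ) = 0 := by
      field_simp at h0
      linarith
    have hz : 3 * c (Sum.inl ((⟨6 + i.1, by omega⟩ : Fin 12), 0)) + c (Sum.inr i) = 0 := by
      exact_mod_cast this
    exact ⟨-c (Sum.inl ((⟨6 + i.1, by omega⟩ : Fin 12), 0)), by omega⟩
  exact mem_Lam_of v (fun a => c (Sum.inl a)) (fun i => c (Sum.inr i)) hdvd hsupp hc

/-! ### Lam is contained in NL and is supported on the first nine blocks -/

lemma Lam_le_NL : Lam ≤ NL := by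
  rw [Lam]
  apply Submodule.span_le.mpr
  rintro x (⟨j, k, _, rfl⟩ | hx)
  · exact Submodule.subset_span (Or.inl ⟨j, k, rfl⟩)
  · rcases hx with rfl | rfl | rfl
    · exact Submodule.subset_span (Or.inr ⟨0, rfl⟩)
    · exact Submodule.subset_span (Or.inr ⟨1, rfl⟩)
    · exact Submodule.subset_span (Or.inr ⟨2, rfl⟩)

/-- The ℚ-submodule of vectors supported on the first nine blocks. -/
def SuppQ : Submodule ℚ WN where
  carrier := {v | ∀ a : JN, 9 ≤ (a.1 : ℕ) → v a = 0}
  zero_mem' := fun a _ => rfl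
  add_mem' := by
    intro x y hx hy a ha
    simp [Pi.add_apply, hx a ha, hy a ha]
  smul_mem' := by
    intro c x hx a ha
    simp [Pi.smul_apply, hx a ha]

lemma Lam_supported {v : WN} (hv : v ∈ Lam) : ∀ a : JN, 9 ≤ (a.1 : ℕ) → v a = 0 := by
  have : Lam ≤ Submodule.restrictScalars ℤ SuppQ := by
    rw [Lam]
    apply Submodule.span_le.mpr
    rintro x (⟨j, k, hj, rfl⟩ | hx)
    · intro a ha
      rw [Et, Pi.single_apply, if_neg]
      rintro rfl
      simp at ha
      omega
    · have hw : ∀ i : Fin 6, i.1 < 3 → ∀ a : JN, 9 ≤ (a.1 : ℕ) → wvec i a = 0 := by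
        intro i hi a ha
        rw [wvec_apply, glue_high i hi a.1 ha]
        simp
      rcases hx with rfl | rfl | rfl
      · exact hw 0 (by norm_num)
      · exact hw 1 (by norm_num)
      · exact hw 2 (by norm_num)
  exact this hv

end Aux8

namespace Aux8

/-! ### the image of P equals Lam -/

lemma idx_lt : ∀ t : F3, (iotaIdx t : ℕ) < 9 := by decide

lemma idx_surj : ∀ j : Fin 12, (j : ℕ) < 9 → ∃ t : F3, iotaIdx t = j := by decide

lemma wdiffDec : ∀ a : JN,
    (etilZ (lineF (0, 0) (0, 1)) a - etilZ (lineF (1, 0) (0, 1)) a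
      = glueMatZ 0 a.1 * (if a.2 = 0 then 1 else 2)) ∧
    (etilZ (lineF (0, 0) (1, 0)) a - etilZ (lineF (0, 1) (1, 0)) a
      = glueMatZ 1 a.1 * (if a.2 = 0 then 1 else 2)) ∧
    (etilZ (lineF (0, 1) (1, 2)) a - etilZ (lineF (0, 0) (1, 2)) a
      = glueMatZ 2 a.1 * (if a.2 = 0 then 1 else 2)) := by decide

lemma wvec_diff (i : Fin 6) (p p' d : F3)
    (h : ∀ a : JN, etilZ (lineF p d) a - etilZ (lineF p' d) a
      = glueMatZ i a.1 * (if a.2 = 0 then 1 else 2)) :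
    wvec i = etil (lineF p d) - etil (lineF p' d) := by
  funext a
  rw [Pi.sub_apply, etil_apply, etil_apply, div_sub_div_same, wvec_apply]
  congr 1
  have h' := congrArg (fun z : ℤ => (z : ℚ)) (h a)
  push_cast [apply_ite (fun z : ℤ => (z : ℚ))] at h'
  linarith [h']

lemma mem_image_Et (j : Fin 12) (hj : (j : ℕ) < 9) (k : Fin 2) :
    Et j k ∈ Submodule.map (iota.restrictScalars ℤ) Plat := by
  obtain ⟨t, rfl⟩ := idx_surj j hj
  by_cases h : t.1 = 1
  · refine ⟨-Ev t k, Submodule.neg_mem _ (Submodule.subset_span (Or.inl ⟨t, k, rfl⟩)), ?_⟩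
    show iota (-Ev t k) = _
    rw [map_neg, iota_single, iotaSgn]
    simp [h]
  · refine ⟨Ev t k, Submodule.subset_span (Or.inl ⟨t, k, rfl⟩), ?_⟩
    show iota (Ev t k) = _
    rw [iota_single, iotaSgn]
    simp [h]

lemma mem_image_w (i : Fin 6) (p p' d : F3) (hd : d ≠ 0)
    (heq : wvec i = etil (lineF p d) - etil (lineF p' d)) :
    wvec i ∈ Submodule.map (iota.restrictScalars ℤ) Plat := by
  refine ⟨eL (lineF p d) - eL (lineF p' d),
    Submodule.subset_span (Or.inr ⟨_, _, ⟨p, p', d, hd, rfl, rfl⟩, rfl⟩), ?_⟩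
  show iota (eL (lineF p d) - eL (lineF p' d)) = _
  rw [map_sub, iota_eL, iota_eL, heq]

lemma image_eq_Lam : Submodule.map (iota.restrictScalars ℤ) Plat = Lam := by
  apply le_antisymm
  · rw [Plat, Submodule.map_span, Submodule.span_le]
    rintro x ⟨y, hy, rfl⟩
    rcases hy with ⟨t, k, rfl⟩ | ⟨L, L', ⟨p, p', d, hd, rfl, rfl⟩, rfl⟩
    · show iota (Ev t k) ∈ Lam
      rw [iota_single, iotaSgn]
      by_cases h : t.1 = 1
      · rw [if_pos h, neg_smul, one_smul]
        exact Submodule.neg_mem _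
          (Submodule.subset_span (Or.inl ⟨iotaIdx t, k, idx_lt t, rfl⟩))
      · rw [if_neg h, one_smul]
        exact Submodule.subset_span (Or.inl ⟨iotaIdx t, k, idx_lt t, rfl⟩)
    · show iota (eL (lineF p d) - eL (lineF p' d)) ∈ Lam
      rw [map_sub, iota_eL, iota_eL,
        show etil (lineF p d) - etil (lineF p' d)
          = (etil (lineF p d) - etil (lineF (0, 0) d))
            - (etil (lineF p' d) - etil (lineF (0, 0) d)) from by abel]
      exact sub_mem (keyD p d hd) (keyD p' d hd)
  · rw [Lam, Submodule.span_le]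
    rintro x (⟨j, k, hj, rfl⟩ | hx)
    · exact mem_image_Et j hj k
    · rcases hx with rfl | rfl | rfl
      · exact mem_image_w 0 _ _ _ (by decide) (wvec_diff 0 _ _ _ fun a => (wdiffDec a).1)
      · exact mem_image_w 1 _ _ _ (by decide) (wvec_diff 1 _ _ _ fun a => (wdiffDec a).2.1)
      · exact mem_image_w 2 _ _ _ (by decide) (wvec_diff 2 _ _ _ fun a => (wdiffDec a).2.2)

end Aux8


theorem statement8 :
    -- ι is an isometry onto its image, up to reversal of the signature
    (∀ x y : VP, BW (iota x) (iota y) = -BP x y) ∧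
    -- ι(P) ⊆ N
    (Submodule.map (iota.restrictScalars ℤ) Plat ≤ NL) ∧
    -- ι(P) = {v ∈ N : ⟨v, Ẽ_j^(k)⟩ = 0 for all j ∈ {10,11,12} and k ∈ {1,2}}
    ((Submodule.map (iota.restrictScalars ℤ) Plat : Set WN) =
      {v | v ∈ NL ∧ ∀ j : Fin 12, 9 ≤ (j : ℕ) → ∀ k : Fin 2, BW v (Et j k) = 0}) ∧
    -- in particular, ι(P) is a primitive sublattice of N ...
    (Submodule.map (iota.restrictScalars ℤ) Plat =
      (Submodule.span ℚ ((Submodule.map (iota.restrictScalars ℤ) Plat : Set WN))).restrictScalars ℤ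
        ⊓ NL) ∧
    -- ... and it is the ℤ-span of the Ẽ_j^(ℓ) with j ≤ 9 together with w₁, w₂, w₃
    (Submodule.map (iota.restrictScalars ℤ) Plat =
      Submodule.span ℤ
        ({x | ∃ (j : Fin 12) (k : Fin 2), (j : ℕ) < 9 ∧ x = Et j k} ∪ {wvec 0, wvec 1, wvec 2})) := by
  have h2 : Submodule.map (iota.restrictScalars ℤ) Plat ≤ NL := by
    rw [Aux8.image_eq_Lam]; exact Aux8.Lam_le_NL
  refine ⟨Aux8.iso, h2, ?_, ?_, Aux8.image_eq_Lam⟩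
  · ext v
    simp only [SetLike.mem_coe, Set.mem_setOf_eq]
    constructor
    · intro hv
      rw [Aux8.image_eq_Lam] at hv
      refine ⟨Aux8.Lam_le_NL hv, fun j hj k => ?_⟩
      have h0 := Aux8.Lam_supported hv (j, 0) hj
      have h1 := Aux8.Lam_supported hv (j, 1) hj
      fin_cases k
      · show BW v (Et j 0) = 0
        rw [Aux8.BW_Et0, h0, h1]; ring
      · show BW v (Et j 1) = 0
        rw [Aux8.BW_Et1, h0, h1]; ring
    · rintro ⟨hNL, horth⟩
      rw [Aux8.image_eq_Lam]
      apply Aux8.NL_supported_mem_Lam hNL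
      rintro ⟨j, k⟩ ha
      have h0 := horth j ha 0
      have h1 := horth j ha 1
      rw [Aux8.BW_Et0] at h0
      rw [Aux8.BW_Et1] at h1
      have hv0 : v (j, 0) = 0 := by linarith
      have hv1 : v (j, 1) = 0 := by linarith
      fin_cases k
      · exact hv0
      · exact hv1
  · apply le_antisymm
    · intro x hx
      exact Submodule.mem_inf.mpr ⟨Submodule.subset_span hx, h2 hx⟩
    · intro v hv
      rw [Submodule.mem_inf] at hv
      obtain ⟨hs, hNL⟩ := hv
      rw [Submodule.restrictScalars_mem] at hs
      rw [Aux8.image_eq_Lam]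
      apply Aux8.NL_supported_mem_Lam hNL
      have hle : Submodule.span ℚ
          ((Submodule.map (iota.restrictScalars ℤ) Plat : Set WN)) ≤ Aux8.SuppQ := by
        rw [Submodule.span_le]
        intro x hx
        have hx' : x ∈ Aux8.Lam := by rw [← Aux8.image_eq_Lam]; exact hx
        exact fun a ha => Aux8.Lam_supported hx' a ha
      exact fun a ha => hle hs a ha
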